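/- Let ~ be a right congruence of finite index on Σ* and let ≈ be its suffix expansion. Then the function n ↦ |Σ^{≤n}/≈| is bounded by a polynomial in n if and only if ~ has no critical tuple. -/

import Mathlib

/-! Common definitions for sliding-window / visibly pushdown formalizations. -/

/-- `γ` grows polynomially: `γ(n) ∈ O(n^k)` for some `k`. -/
def GrowsPolynomially (γ : ℕ → ℕ) : Prop :=
  ∃ k C : ℕ, ∀ n : ℕ, γ n ≤ C * (n + 1) ^ k

/-- `γ` grows exponentially: there is `c > 1` with `γ(n) ≥ c^n` for infinitely many `n`. -/
def GrowsExponentially (γ : ℕ → ℕ) : Prop :=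
  ∃ c : ℝ, 1 < c ∧ ∀ m : ℕ, ∃ n : ℕ, m ≤ n ∧ c ^ n ≤ (γ n : ℝ)

/-- A set of words is suffix-closed. -/
def SuffixClosed {α : Type} (X : Set (List α)) : Prop :=
  ∀ x ∈ X, ∀ s : List α, s <:+ x → s ∈ X

/-- Domain of a partial function presented with `Option`. -/
def pdom {α β : Type} (t : List α → Option β) : Set (List α) := {x | t x ≠ none}

/-- The `t`-growth of `X`: the number of values of `t` on words of `X` of length at most `n`. -/
noncomputable def growthOf {α : Type} {Y : Type} (t : List α → Y) (X : Set (List α)) (n : ℕ) : ℕ :=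
  (t '' {x | x ∈ X ∧ x.length ≤ n}).ncard

/-- Growth of a language: number of its words of length at most `n`. -/
noncomputable def langGrowth {β : Type} (L : Set (List β)) (n : ℕ) : ℕ :=
  {y | y ∈ L ∧ y.length ≤ n}.ncard

/-- Suffix expansion of a (total or partial) function: the tuple of values on all
nonempty suffixes `a₁⋯aₙ, a₂⋯aₙ, …, aₙ` of the input. -/
def cev {α : Type} {Y : Type} (t : List α → Y) (x : List α) : List Y :=
  x.tails.dropLast.map t

/-- Image of `X` under the partial function `t`. -/
def optImage {α β : Type} (t : List α → Option β) (X : Set (List α)) : Set β :=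
  {y | ∃ x ∈ X, t x = some y}

/-- A language is bounded if it is contained in `w₁* w₂* ⋯ w_k*`. -/
def BoundedLang {β : Type} (L : Set (List β)) : Prop :=
  ∃ ws : List (List β), ∀ x ∈ L, ∃ ms : List ℕ, ms.length = ws.length ∧
    x = (List.zipWith (fun (w : List β) (m : ℕ) => (List.replicate m w).flatten) ws ms).flatten

/-- `{u,v}*`: all concatenations of copies of `u` and `v`. -/
def UVStar {α : Type} (u v : List α) : Set (List α) :=
  {w | ∃ l : List (List α), (∀ p ∈ l, p = u ∨ p = v) ∧ w = l.flatten}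

/-- `{u,v}^{≤ n}`: concatenations of at most `n` words, each equal to `u` or `v`. -/
def UVPow {α : Type} (u v : List α) (n : ℕ) : Set (List α) :=
  {w | ∃ l : List (List α), (∀ p ∈ l, p = u ∨ p = v) ∧ l.length ≤ n ∧ w = l.flatten}

/-- The set `{u₂,v₂}{u,v}* Z`. -/
def FoolingSet {α : Type} (u₂ v₂ u v : List α) (Z : Set (List α)) : Set (List α) :=
  {x | ∃ a w z, (a = u₂ ∨ a = v₂) ∧ w ∈ UVStar u v ∧ z ∈ Z ∧ x = a ++ (w ++ z)}

/-- Linear fooling scheme for a partial function `t`. -/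
def IsLinearFoolingScheme {α Y : Type} (t : List α → Option Y)
    (u₂ v₂ u v : List α) (Z : Set (List α)) : Prop :=
  u₂ <:+ u ∧ v₂ <:+ v ∧ u₂.length = v₂.length ∧
  FoolingSet u₂ v₂ u v Z ⊆ pdom t ∧
  ∃ C : ℕ, ∀ n : ℕ, ∃ z ∈ Z, z.length ≤ C * (n + 1) ∧
    ∀ w ∈ UVPow u v n, t (u₂ ++ (w ++ z)) ≠ t (v₂ ++ (w ++ z))

/-- `X` contains a linear fooling set for `t`. -/
def ContainsLinearFoolingSet {α Y : Type} (t : List α → Option Y) (X : Set (List α)) : Prop :=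
  ∃ u₂ v₂ u v Z, IsLinearFoolingScheme t u₂ v₂ u v Z ∧ FoolingSet u₂ v₂ u v Z ⊆ X

/-! ### Transducers and rational functions -/

/-- A finite-state transducer over `(α, β)` with terminal output function. -/
structure Transducer (α β : Type) where
  Q : Type
  finQ : Fintype Q
  I : Set Q
  F : Set Q
  Δ : Set (Q × List α × List β × Q)
  finΔ : Δ.Finite
  o : Q → List β

namespace Transducer

variable {α β : Type}

/-- A run from `p` to `r` with input `x` and output `y`. -/
inductive Run (A : Transducer α β) : A.Q → List α → List β → A.Q → Prop
  | nil (q : A.Q) : Run A q [] [] q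
  | cons {p q r : A.Q} {x₁ x : List α} {y₁ y : List β} :
      (p, x₁, y₁, q) ∈ A.Δ → Run A q x y r → Run A p (x₁ ++ x) (y₁ ++ y) r

/-- The transduction defined by a transducer. -/
def T (A : Transducer α β) : Set (List α × List β) :=
  {p | ∃ q₀ q y, q₀ ∈ A.I ∧ q ∈ A.F ∧ A.Run q₀ p.1 y q ∧ p.2 = y ++ A.o q}

end Transducer

/-- A partial function is rational if its graph is the transduction of some transducer. -/
def IsRationalFun {α β : Type} (t : List α → Option (List β)) : Prop :=
  ∃ A : Transducer α β, ∀ x y, t x = some y ↔ (x, y) ∈ A.T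

/-! ### Right congruences, suffix expansions, critical tuples -/

/-- A right congruence: an equivalence relation compatible with appending on the right. -/
def IsRightCongruence {α : Type} (r : List α → List α → Prop) : Prop :=
  Equivalence r ∧ ∀ x y z : List α, r x y → r (x ++ z) (y ++ z)

/-- Suffix expansion of a relation: words of the same length whose corresponding
nonempty suffixes are all related. -/
def SuffixExpansion {α : Type} (r : List α → List α → Prop) (x y : List α) : Prop :=
  x.length = y.length ∧ ∀ i < x.length, r (x.drop i) (y.drop i)

/-- Number of `r`-classes of words of length at most `n`. -/
noncomputable def classCount {α : Type} (r : List α → List α → Prop) (n : ℕ) : ℕ :=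
  Set.ncard {C : Set (List α) | ∃ x : List α, x.length ≤ n ∧ C = {y | r x y}}

/-- A relation has finite index if it has finitely many classes. -/
def FiniteIndex {α : Type} (r : List α → List α → Prop) : Prop :=
  Set.Finite {C : Set (List α) | ∃ x : List α, C = {y | r x y}}

/-- Critical tuple in a right congruence. -/
def IsCriticalTuple {α : Type} (r : List α → List α → Prop) (u₂ v₂ u v : List α) : Prop :=
  1 ≤ u₂.length ∧ u₂.length = v₂.length ∧ u₂ <:+ u ∧ v₂ <:+ v ∧
  ∀ w ∈ UVStar u v, ¬ r (u₂ ++ w) (v₂ ++ w)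

/-- The Myhill–Nerode right congruence of a language. -/
def MNrel {α : Type} (L : Set (List α)) (x y : List α) : Prop :=
  ∀ z : List α, x ++ z ∈ L ↔ y ++ z ∈ L

/-! ### Suffix distance and the canonical right congruence of a rational function -/

/-- Longest common prefix. -/
def cpre {β : Type} [DecidableEq β] : List β → List β → List β
  | a :: x, b :: y => if a = b then a :: cpre x y else []
  | _, _ => []

/-- `‖x,y‖ = |x| + |y| − 2|x ∧ y|`, where `x ∧ y` is the longest common suffix. -/
def suffDist {β : Type} [DecidableEq β] (x y : List β) : ℕ :=
  x.length + y.length - 2 * (cpre x.reverse y.reverse).length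

/-- Value of a partial function (defaulting to the empty word off the domain). -/
def pval {α β : Type} (t : List α → Option (List β)) (x : List α) : List β :=
  (t x).getD []

/-- The right congruence `R_t` of Reutenauer–Schützenberger. -/
def Rt {α β : Type} [DecidableEq β] (t : List α → Option (List β)) (u v : List α) : Prop :=
  (∀ z : List α, u ++ z ∈ pdom t ↔ v ++ z ∈ pdom t) ∧
  Set.Finite {d : ℕ | ∃ w : List α, u ++ w ∈ pdom t ∧ v ++ w ∈ pdom t ∧
      d = suffDist (pval t (u ++ w)) (pval t (v ++ w))}

/-- Two partial functions are adjacent. -/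
def Adjacent {α β : Type} [DecidableEq β] (t₁ t₂ : List α → Option (List β)) : Prop :=
  Set.Finite {d : ℕ | ∃ w : List α, w ∈ pdom t₁ ∧ w ∈ pdom t₂ ∧
      d = suffDist (pval t₁ w) (pval t₂ w)}

/-! ### Visibly pushdown automata -/

/-- Kinds of letters of a pushdown alphabet. -/
inductive VPKind : Type
  | call : VPKind
  | ret : VPKind
  | intern : VPKind
deriving DecidableEq

/-- A visibly pushdown automaton over the pushdown alphabet determined by `pa`.
The bottom-of-stack symbol `⊥` is represented implicitly by the empty stack. -/
structure VPA (α : Type) (pa : α → VPKind) where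
  Q : Type
  finQ : Fintype Q
  Γ : Type
  finΓ : Fintype Γ
  q₀ : Q
  F : Set Q
  δc : Q → α → Γ × Q
  δr : Q → α → Option Γ → Q
  δi : Q → α → Q

namespace VPA

variable {α : Type} {pa : α → VPKind}

/-- One step of the VPA on a configuration (stack with top at the head, state). -/
def step (A : VPA α pa) (c : List A.Γ × A.Q) (a : α) : List A.Γ × A.Q :=
  match pa a with
  | VPKind.call => ((A.δc c.2 a).1 :: c.1, (A.δc c.2 a).2)
  | VPKind.intern => (c.1, A.δi c.2 a)
  | VPKind.ret =>
    match c.1 with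
    | [] => ([], A.δr c.2 a none)
    | γ :: st => (st, A.δr c.2 a (some γ))

/-- Extended transition function on words. -/
def run (A : VPA α pa) (c : List A.Γ × A.Q) (w : List α) : List A.Γ × A.Q :=
  w.foldl A.step c

/-- The language accepted by a VPA (from the initial configuration `⊥q₀`). -/
def acceptsLang (A : VPA α pa) : Set (List α) :=
  {w | (A.run ([], A.q₀) w).2 ∈ A.F}

/-- Language accepted from a configuration. -/
def AccLang (A : VPA α pa) (c : List A.Γ × A.Q) : Set (List α) :=
  {w | (A.run c w).2 ∈ A.F}

/-- The reachable configurations. -/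
def rConf (A : VPA α pa) : Set (List A.Γ × A.Q) :=
  Set.range (fun w => A.run ([], A.q₀) w)

end VPA

/-- A language is a visibly pushdown language over the pushdown alphabet `pa`. -/
def IsVPL {α : Type} (pa : α → VPKind) (L : Set (List α)) : Prop :=
  ∃ A : VPA α pa, L = A.acceptsLang

/-- Well-matched words over a pushdown alphabet. -/
inductive WellMatched {α : Type} (pa : α → VPKind) : List α → Prop
  | nil : WellMatched pa []
  | intern (a : α) : pa a = VPKind.intern → WellMatched pa [a]
  | append {u v : List α} : WellMatched pa u → WellMatched pa v → WellMatched pa (u ++ v)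
  | wrap {w : List α} {a b : α} : WellMatched pa w → pa a = VPKind.call → pa b = VPKind.ret →
      WellMatched pa (a :: (w ++ [b]))

/-- Descending words: concatenations of well-matched words and return letters. -/
def Descending {α : Type} (pa : α → VPKind) (w : List α) : Prop :=
  ∃ l : List (List α),
    (∀ p ∈ l, WellMatched pa p ∨ ∃ b : α, pa b = VPKind.ret ∧ p = [b]) ∧ w = l.flatten

/-- Length-lexicographic order on configurations `⊥αq` (stacks compared bottom-first). -/
def ConfLe {Q Γ : Type} (ltQ : LinearOrder Q) (ltΓ : LinearOrder Γ)
    (c d : List Γ × Q) : Prop :=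
  c.1.length < d.1.length ∨
    (c.1.length = d.1.length ∧
      (List.Lex ltΓ.lt c.1.reverse d.1.reverse ∨ (c.1 = d.1 ∧ ltQ.le c.2 d.2)))

/-- `rep` chooses from each equivalence class of reachable configurations the
length-lexicographically least representative. -/
def IsRepFun {α : Type} {pa : α → VPKind} (A : VPA α pa)
    (ltQ : LinearOrder A.Q) (ltΓ : LinearOrder A.Γ)
    (rep : List A.Γ × A.Q → List A.Γ × A.Q) : Prop :=
  ∀ c ∈ A.rConf, rep c ∈ A.rConf ∧ A.AccLang (rep c) = A.AccLang c ∧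
    ∀ c' ∈ A.rConf, A.AccLang c' = A.AccLang c → ConfLe ltQ ltΓ (rep c) c'

/-- `ν_A(w)`: the representative of the configuration reached on `w`. -/
def nuA {α : Type} {pa : α → VPKind} (A : VPA α pa)
    (rep : List A.Γ × A.Q → List A.Γ × A.Q) (w : List α) : List A.Γ × A.Q :=
  rep (A.run ([], A.q₀) w)

/-- `σ₀(w)`: the states representing the Myhill–Nerode classes of the nonempty suffixes. -/
def sigma0 {α : Type} {pa : α → VPKind} (A : VPA α pa)
    (rep : List A.Γ × A.Q → List A.Γ × A.Q) (w : List α) : List A.Q :=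
  w.tails.dropLast.map fun s => (nuA A rep s).2

/-- `φ(w)`: the state transformation of a well-matched word. -/
def phiVPA {α : Type} {pa : α → VPKind} (A : VPA α pa) (w : List α) : A.Q → A.Q :=
  fun p => (A.run ([], p) w).2

/-- `σ₁(w) = φ(w) q₂ ⋯ qₙ`, a word over the alphabet `Q^Q ∪ Q`. -/
def sigma1 {α : Type} {pa : α → VPKind} (A : VPA α pa)
    (rep : List A.Γ × A.Q → List A.Γ × A.Q) (w : List α) : List ((A.Q → A.Q) ⊕ A.Q) :=
  Sum.inl (phiVPA A w) :: ((sigma0 A rep w).tail.map Sum.inr)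

/-! ### Real-time right transducers -/

/-- A real-time right transducer (reads its input from right to left). -/
structure RightTransducer (α β : Type) where
  Q : Type
  finQ : Fintype Q
  F : Set Q
  I : Set Q
  Δ : Set (Q × α × List β × Q)
  finΔ : Δ.Finite
  o : Q → List β

namespace RightTransducer

variable {α β : Type}

/-- Input word of a sequence of transitions. -/
def inputOf {Q : Type} (ts : List (Q × α × List β × Q)) : List α :=
  ts.map fun tr => tr.2.1

/-- Output word of a sequence of transitions. -/
def outputOf {Q : Type} (ts : List (Q × α × List β × Q)) : List β :=
  (ts.map fun tr => tr.2.2.1).flatten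

/-- `IsRunFrom A q ts p`: `ts` is a run on its input from the (rightmost) state `p`
to the (leftmost) state `q`; the transitions are listed left to right. -/
def IsRunFrom (A : RightTransducer α β) : A.Q → List (A.Q × α × List β × A.Q) → A.Q → Prop
  | q, [], p => q = p
  | q, tr :: ts, p => tr ∈ A.Δ ∧ tr.1 = q ∧ IsRunFrom A tr.2.2.2 ts p

/-- There is a run on `w` from `p` (right) to `q` (left). -/
def RunOn (A : RightTransducer α β) (q : A.Q) (w : List α) (p : A.Q) : Prop :=
  ∃ ts, A.IsRunFrom q ts p ∧ inputOf ts = w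

/-- `q ⪯ p`: there is a run from `p` to `q`. -/
def Below (A : RightTransducer α β) (q p : A.Q) : Prop :=
  ∃ w, A.RunOn q w p

/-- The partial function defined by a right transducer. -/
def Defines (A : RightTransducer α β) (t : List α → Option (List β)) : Prop :=
  ∀ x y, t x = some y ↔ ∃ p q ts, p ∈ A.F ∧ q ∈ A.I ∧ A.IsRunFrom p ts q ∧
    inputOf ts = x ∧ y = A.o p ++ outputOf ts

/-- Every state occurs on some initial accepting run. -/
def Trim (A : RightTransducer α β) : Prop :=
  ∀ s : A.Q, ∃ p q ts₁ ts₂, p ∈ A.F ∧ q ∈ A.I ∧ A.IsRunFrom p ts₁ s ∧ A.IsRunFrom s ts₂ q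

/-- Every input word has at most one initial accepting run. -/
def Unambiguous (A : RightTransducer α β) : Prop :=
  ∀ p p' q q' ts ts', p ∈ A.F → p' ∈ A.F → q ∈ A.I → q' ∈ A.I →
    A.IsRunFrom p ts q → A.IsRunFrom p' ts' q' → inputOf ts = inputOf ts' →
    p = p' ∧ ts = ts'

/-- `w` is guarded by `p`: some run on `w` from `p` stays in the SCC of `p`. -/
def Guarded (A : RightTransducer α β) (p : A.Q) (w : List α) : Prop :=
  ∃ q', A.RunOn q' w p ∧ A.Below p q'

/-- The transducer is well-behaved: the terminal outputs of guarded accepting runs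
from the same state on words of equal length coincide. -/
def WellBehaved (A : RightTransducer α β) : Prop :=
  ∀ (p q q' : A.Q) ts ts', q ∈ A.F → q' ∈ A.F →
    A.IsRunFrom q ts p → A.IsRunFrom q' ts' p →
    A.Guarded p (inputOf ts) → A.Guarded p (inputOf ts') →
    (inputOf ts).length = (inputOf ts').length →
    A.o q ++ outputOf ts = A.o q' ++ outputOf ts'

end RightTransducer

/-! ### The Parikh-like map Ψ -/

/-- `Ψ(w)`: each letter of `w` paired with its position counted from the right (1-based). -/
def Psi {α : Type} (w : List α) : Set (α × ℕ) :=
  {p | ∃ i : ℕ, w[i]? = some p.1 ∧ p.2 = w.length - i}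

/-- `Ψ(L) = ⋃_{w ∈ L} Ψ(w)`. -/
def PsiL {α : Type} (L : Set (List α)) : Set (α × ℕ) :=
  ⋃ w ∈ L, Psi w

section Statement9Aux

variable {α : Type}

theorem se_equiv {r : List α → List α → Prop} (h : Equivalence r) :
    Equivalence (SuffixExpansion r) := by
  constructor
  · intro x; exact ⟨rfl, fun i _ => h.refl _⟩
  · rintro x y ⟨hl, hs⟩
    exact ⟨hl.symm, fun i hi => h.symm (hs i (by omega))⟩
  · rintro x y z ⟨hl, hs⟩ ⟨hl', hs'⟩
    exact ⟨hl.trans hl', fun i hi => h.trans (hs i hi) (hs' i (by omega))⟩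

theorem se_of_class_eq {r : List α → List α → Prop} (h : Equivalence (SuffixExpansion r)) {x y}
    (hc : {z | SuffixExpansion r x z} = {z | SuffixExpansion r y z}) : SuffixExpansion r x y := by
  have hy : y ∈ {z | SuffixExpansion r y z} := h.refl y
  rw [← hc] at hy; exact hy

theorem classSet_finite [Finite α] (r' : List α → List α → Prop) (n : ℕ) :
    {C : Set (List α) | ∃ x : List α, x.length ≤ n ∧ C = {y | r' x y}}.Finite := by
  have h : {C : Set (List α) | ∃ x : List α, x.length ≤ n ∧ C = {y | r' x y}} =
      (fun x => {y | r' x y}) '' {x : List α | x.length ≤ n} := by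
    ext C
    simp only [Set.mem_setOf_eq, Set.mem_image]
    exact ⟨fun ⟨x, hx, hC⟩ => ⟨x, hx, hC.symm⟩, fun ⟨x, hx, hC⟩ => ⟨x, hx, hC.symm⟩⟩
  rw [h]; exact (List.finite_length_le α n).image _

/-! ### Quotient setup -/

def rqt (r : List α → List α → Prop) (h : Equivalence r) : Setoid (List α) := ⟨r, h⟩

abbrev Qt (r : List α → List α → Prop) (h : Equivalence r) := Quotient (rqt r h)

def qmk {r : List α → List α → Prop} (h : Equivalence r) (x : List α) : Qt r h :=
  Quotient.mk (rqt r h) x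

theorem qmk_eq_iff {r : List α → List α → Prop} (h : Equivalence r) {x y : List α} :
    qmk h x = qmk h y ↔ r x y :=
  ⟨fun h' => Quotient.exact h', fun h' => @Quotient.sound _ (rqt r h) x y h'⟩

noncomputable def clsSet {r : List α → List α → Prop} (h : Equivalence r) : Qt r h → Set (List α) :=
  Quotient.lift (fun x => {y | r x y}) (by
    intro a b hab
    ext z
    exact ⟨fun hz => h.trans (h.symm hab) hz, fun hz => h.trans hab hz⟩)

theorem clsSet_mem {r : List α → List α → Prop} (h : Equivalence r) (q : Qt r h) :
    clsSet h q ∈ {C : Set (List α) | ∃ x : List α, C = {y | r x y}} := by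
  induction q using Quotient.ind with
  | _ a => exact ⟨a, rfl⟩

theorem finite_qt {r : List α → List α → Prop} (h : Equivalence r) (hfi : FiniteIndex r) :
    Finite (Qt r h) := by
  haveI := hfi.to_subtype
  apply Finite.of_injective
    (fun q : Qt r h => (⟨clsSet h q, clsSet_mem h q⟩ : {C : Set (List α) | ∃ x : List α, C = {y | r x y}}))
  intro q q' hqq'
  induction q using Quotient.ind with
  | _ a =>
  induction q' using Quotient.ind with
  | _ b =>
  have h2 : clsSet h (qmk h a) = clsSet h (qmk h b) := congrArg Subtype.val hqq'
  have h3 : b ∈ {y | r a y} := by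
    have : b ∈ clsSet h (qmk h b) := h.refl b
    rw [← h2] at this; exact this
  exact Quotient.sound h3

noncomputable def phiw {r : List α → List α → Prop} (hrc : IsRightCongruence r) (s : List α) :
    Qt r hrc.1 → Qt r hrc.1 :=
  Quotient.lift (fun y => qmk hrc.1 (y ++ s)) (fun a b hab => Quotient.sound (hrc.2 a b s hab))

theorem phiw_comp {r : List α → List α → Prop} (hrc : IsRightCongruence r) (a b : List α) :
    phiw hrc (a ++ b) = phiw hrc b ∘ phiw hrc a := by
  funext q
  induction q using Quotient.ind with
  | _ y =>
  show qmk hrc.1 (y ++ (a ++ b)) = qmk hrc.1 ((y ++ a) ++ b)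
  rw [List.append_assoc]

theorem phiw_eq_iff {r : List α → List α → Prop} (hrc : IsRightCongruence r) {s s' : List α} :
    phiw hrc s = phiw hrc s' ↔ ∀ y : List α, r (y ++ s) (y ++ s') := by
  constructor
  · intro h y
    exact Quotient.exact (congrFun h (qmk hrc.1 y))
  · intro h
    funext q
    induction q using Quotient.ind with
    | _ y => exact Quotient.sound (h y)

/-! ### Key lemma from no critical tuple -/

theorem key_lemma {r : List α → List α → Prop} (hrc : IsRightCongruence r)
    (hnc : ¬ ∃ u₂ v₂ u v, IsCriticalTuple r u₂ v₂ u v)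
    (s p q : List α)
    (hp : ∀ y : List α, r (y ++ (p ++ s)) (y ++ s))
    (hq : ∀ y : List α, r (y ++ (q ++ s)) (y ++ s))
    (hl : p.length = q.length) (t : ℕ) (ht : t < p.length) :
    r (p.drop t ++ s) (q.drop t ++ s) := by
  by_contra hne
  apply hnc
  refine ⟨p.drop t, q.drop t, p, q, ?_, ?_, List.drop_suffix t p, List.drop_suffix t q, ?_⟩
  · simp only [List.length_drop]; omega
  · simp only [List.length_drop, hl]
  · intro w hw hrw
    have loop : ∀ (l : List (List α)), (∀ b ∈ l, b = p ∨ b = q) → ∀ y : List α,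
        r (y ++ (l.flatten ++ s)) (y ++ s) := by
      intro l
      induction l with
      | nil => intro _ y; simpa using hrc.1.refl (y ++ s)
      | cons b l ih =>
        intro hbl y
        have h1 : r ((y ++ b) ++ (l.flatten ++ s)) ((y ++ b) ++ s) :=
          ih (fun b' hb' => hbl b' (by simp [hb'])) (y ++ b)
        have h2 : r ((y ++ b) ++ s) (y ++ s) := by
          rcases hbl b (by simp) with rfl | rfl
          · simpa [List.append_assoc] using hp y
          · simpa [List.append_assoc] using hq y
        have h1' : r (y ++ ((b :: l).flatten ++ s)) ((y ++ b) ++ s) := by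
          simpa [List.append_assoc] using h1
        exact hrc.1.trans h1' h2
    obtain ⟨l, hlw, rfl⟩ := hw
    have h3 : r ((p.drop t ++ l.flatten) ++ s) ((q.drop t ++ l.flatten) ++ s) :=
      hrc.2 _ _ s hrw
    have h3' : r (p.drop t ++ (l.flatten ++ s)) (q.drop t ++ (l.flatten ++ s)) := by
      simpa [List.append_assoc] using h3
    have h4 := loop l hlw (p.drop t)
    have h5 := loop l hlw (q.drop t)
    exact hne (hrc.1.trans (hrc.1.symm h4) (hrc.1.trans h3' h5))

end Statement9Aux
section Statement9PartI

variable {α : Type}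

/-- last-difference decomposition of two distinct equal-length lists -/
theorem exists_last_diff : ∀ (f g : List Bool), f.length = g.length → f ≠ g →
    ∃ f₁ g₁ t a b, a ≠ b ∧ f = f₁ ++ a :: t ∧ g = g₁ ++ b :: t ∧ f₁.length = g₁.length := by
  intro f
  induction f using List.reverseRecOn with
  | nil =>
    intro g hl hne
    cases g with
    | nil => exact absurd rfl hne
    | cons c g => simp at hl
  | append_singleton f' a ih =>
    intro g hl hne
    rcases List.eq_nil_or_concat g with rfl | ⟨g', b, rfl⟩
    · simp at hl
    rw [List.concat_eq_append] at *
    have hl' : f'.length = g'.length := by simpa using hl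
    by_cases hab : a = b
    · subst hab
      have hne' : f' ≠ g' := by rintro rfl; exact hne rfl
      obtain ⟨f₁, g₁, t, a', b', hab', hf, hg, h11⟩ := ih g' hl' hne'
      refine ⟨f₁, g₁, t ++ [a], a', b', hab', ?_, ?_, h11⟩
      · rw [hf]; simp
      · rw [hg]; simp
    · exact ⟨f', g', [], a, b, hab, by simp, by simp, hl'⟩

def blkL (u v : List α) (bs : List Bool) : List α := (bs.map (fun c => if c then u else v)).flatten

theorem blkL_append (u v : List α) (bs cs : List Bool) :
    blkL u v (bs ++ cs) = blkL u v bs ++ blkL u v cs := by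
  simp [blkL]

theorem blkL_cons (u v : List α) (c : Bool) (bs : List Bool) :
    blkL u v (c :: bs) = (if c then u else v) ++ blkL u v bs := by
  simp [blkL]

theorem blkL_length {u v : List α} {ℓ : ℕ} (hu : u.length = ℓ) (hv : v.length = ℓ)
    (bs : List Bool) : (blkL u v bs).length = bs.length * ℓ := by
  induction bs with
  | nil => simp [blkL]
  | cons c bs ih =>
    rw [blkL_cons, List.length_append, ih]
    cases c <;> simp [hu, hv] <;> ring

theorem uvstar_nil (u v : List α) : [] ∈ UVStar u v := ⟨[], by simp, rfl⟩

theorem uvstar_append {u v x y : List α} (hx : x ∈ UVStar u v) (hy : y ∈ UVStar u v) :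
    x ++ y ∈ UVStar u v := by
  obtain ⟨l, hl, rfl⟩ := hx
  obtain ⟨l', hl', rfl⟩ := hy
  refine ⟨l ++ l', ?_, by simp⟩
  intro p hp
  rcases List.mem_append.1 hp with h | h
  exacts [hl p h, hl' p h]

theorem uvstar_repl_u (u v : List α) (m : ℕ) : (List.replicate m u).flatten ∈ UVStar u v :=
  ⟨List.replicate m u, fun p hp => Or.inl (List.eq_of_mem_replicate hp), rfl⟩

theorem uvstar_repl_v (u v : List α) (m : ℕ) : (List.replicate m v).flatten ∈ UVStar u v :=
  ⟨List.replicate m v, fun p hp => Or.inr (List.eq_of_mem_replicate hp), rfl⟩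

theorem uvstar_blkL {u v U V : List α} (hU : U ∈ UVStar u v) (hV : V ∈ UVStar u v)
    (t : List Bool) : blkL U V t ∈ UVStar u v := by
  induction t with
  | nil => exact uvstar_nil u v
  | cons c t ih =>
    rw [blkL_cons]
    refine uvstar_append ?_ ih
    cases c
    · simpa using hV
    · simpa using hU

theorem suffix_flatten_replicate {u u₂ : List α} (h : u₂ <:+ u) {m : ℕ} (hm : 1 ≤ m) :
    u₂ <:+ (List.replicate m u).flatten := by
  obtain ⟨m', rfl⟩ : ∃ m', m = m' + 1 := ⟨m - 1, by omega⟩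
  have h2 : (List.replicate (m' + 1) u).flatten = (List.replicate m' u).flatten ++ u := by
    rw [List.replicate_succ']
    simp
  rw [h2]
  exact h.trans (List.suffix_append _ u)

theorem length_flatten_replicate (u : List α) (m : ℕ) :
    ((List.replicate m u).flatten).length = m * u.length := by
  induction m with
  | zero => simp
  | succ m ih => rw [List.replicate_succ]; simp [ih]; ring

theorem linear_helper (a b : ℕ) : ∃ j : ℕ, a + j * b < 2 ^ j := by
  set A := a + b + 1 with hA
  refine ⟨3 * A + 3, ?_⟩
  have h1 : A + 2 ≤ 2 ^ (A + 1) := by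
    have := Nat.lt_two_pow_self (n := A + 1); omega
  have h2 : (A + 2) ^ 3 ≤ (2 ^ (A + 1)) ^ 3 := Nat.pow_le_pow_left h1 3
  have h3 : (2 : ℕ) ^ (3 * A + 3) = (2 ^ (A + 1)) ^ 3 := by
    rw [← pow_mul]; ring_nf
  have h4 : a + (3 * A + 3) * b < (A + 2) ^ 3 := by
    have s1 : a + (3 * A + 3) * b ≤ (a + b) * (3 * A + 4) := by nlinarith
    have s2 : A * (3 * A + 4) = (a + b) * (3 * A + 4) + (3 * A + 4) := by rw [hA]; ring
    have s3 : (A + 2) ^ 3 = A * (3 * A + 4) + (A ^ 3 + 3 * A ^ 2 + 8 * A + 8) := by ring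
    omega
  omega

end Statement9PartI
section Statement9PartIb

variable {α : Type}

theorem sep_core {r : List α → List α → Prop} {u₂ v₂ u v : List α}
    (hcrit : IsCriticalTuple r u₂ v₂ u v) (f₁ g₁ t : List Bool) (h11 : f₁.length = g₁.length) :
    ¬ SuffixExpansion r
      (blkL ((List.replicate v.length u).flatten) ((List.replicate u.length v).flatten) (f₁ ++ true :: t))
      (blkL ((List.replicate v.length u).flatten) ((List.replicate u.length v).flatten) (g₁ ++ false :: t)) := by
  intro hse
  obtain ⟨hseL, hseP⟩ := hse
  set U := (List.replicate v.length u).flatten with hU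
  set V := (List.replicate u.length v).flatten with hV
  set ℓ := v.length * u.length with hℓ
  have h1 := hcrit.1
  have hlen2 := hcrit.2.1
  have hsu := hcrit.2.2.1
  have hsv := hcrit.2.2.2.1
  have hsep := hcrit.2.2.2.2
  have hcu : 1 ≤ u.length := le_trans h1 hsu.length_le
  have hcv : 1 ≤ v.length := le_trans (hlen2 ▸ h1) hsv.length_le
  have hUlen : U.length = ℓ := by rw [hU, length_flatten_replicate]
  have hVlen : V.length = ℓ := by rw [hV, length_flatten_replicate, hℓ]; ring
  obtain ⟨U₁, hU₁⟩ := suffix_flatten_replicate hsu hcv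
  obtain ⟨V₁, hV₁⟩ := suffix_flatten_replicate hsv hcu
  rw [← hU] at hU₁
  rw [← hV] at hV₁
  have hU₁len : U₁.length + u₂.length = ℓ := by rw [← hUlen, ← hU₁]; simp
  have hV₁len : V₁.length + v₂.length = ℓ := by rw [← hVlen, ← hV₁]; simp
  have hx : blkL U V (f₁ ++ true :: t) = (blkL U V f₁ ++ U₁) ++ (u₂ ++ blkL U V t) := by
    rw [blkL_append, blkL_cons]
    simp only [if_pos]
    rw [← hU₁]; simp [List.append_assoc]
  have hy : blkL U V (g₁ ++ false :: t) = (blkL U V g₁ ++ V₁) ++ (v₂ ++ blkL U V t) := by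
    rw [blkL_append, blkL_cons]
    simp only [Bool.false_eq_true, if_neg, ite_false]
    rw [← hV₁]; simp [List.append_assoc]
  have hieq : (blkL U V f₁ ++ U₁).length = (blkL U V g₁ ++ V₁).length := by
    simp only [List.length_append, blkL_length hUlen hVlen]
    rw [h11]; omega
  have hilt : (blkL U V f₁ ++ U₁).length < (blkL U V (f₁ ++ true :: t)).length := by
    rw [hx]; simp only [List.length_append]; omega
  have hr := hseP _ hilt
  rw [hx, List.drop_left] at hr
  rw [hy, hieq, List.drop_left] at hr
  exact hsep (blkL U V t) (uvstar_blkL (uvstar_repl_u u v _) (uvstar_repl_v u v _) t) hr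

theorem critical_not_poly [Fintype α] {r : List α → List α → Prop}
    (hrc : IsRightCongruence r) {u₂ v₂ u v : List α}
    (hcrit : IsCriticalTuple r u₂ v₂ u v) :
    ¬ GrowsPolynomially (classCount (SuffixExpansion r)) := by
  rintro ⟨k, C, hpoly⟩
  set U := (List.replicate v.length u).flatten with hU
  set V := (List.replicate u.length v).flatten with hV
  set ℓ := v.length * u.length with hℓ
  have h1 := hcrit.1
  have hcu : 1 ≤ u.length := le_trans h1 hcrit.2.2.1.length_le
  have hcv : 1 ≤ v.length := le_trans (hcrit.2.1 ▸ h1) hcrit.2.2.2.1.length_le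
  have hUlen : U.length = ℓ := by rw [hU, length_flatten_replicate]
  have hVlen : V.length = ℓ := by rw [hV, length_flatten_replicate, hℓ]; ring
  have hℓ1 : 1 ≤ ℓ := by rw [hℓ]; exact Nat.mul_le_mul hcv hcu
  obtain ⟨j, hj⟩ := linear_helper (C + ℓ * k) k
  set nb := 2 ^ j with hnb
  set n := nb * ℓ with hn
  have hsea := se_equiv hrc.1
  set G : (Fin nb → Bool) → Set (List α) :=
    fun f => {z | SuffixExpansion r (blkL U V (List.ofFn f)) z} with hG
  have hGinj : Function.Injective G := by
    intro f g hfg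
    by_contra hne
    have hne' : List.ofFn f ≠ List.ofFn g := fun h => hne (List.ofFn_injective h)
    have hse : SuffixExpansion r (blkL U V (List.ofFn f)) (blkL U V (List.ofFn g)) :=
      se_of_class_eq hsea hfg
    obtain ⟨f₁, g₁, t, a, b, hab, hf, hg, h11⟩ :=
      exists_last_diff (List.ofFn f) (List.ofFn g) (by simp) hne'
    cases a <;> cases b
    · exact hab rfl
    · rw [hf, hg] at hse
      exact sep_core hcrit g₁ f₁ t h11.symm (hsea.symm hse)
    · rw [hf, hg] at hse
      exact sep_core hcrit f₁ g₁ t h11 hse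
    · exact hab rfl
  have hsub : Set.range G ⊆
      {C' : Set (List α) | ∃ x : List α, x.length ≤ n ∧ C' = {z | SuffixExpansion r x z}} := by
    rintro C' ⟨f, rfl⟩
    refine ⟨blkL U V (List.ofFn f), ?_, rfl⟩
    rw [blkL_length hUlen hVlen]
    simp [hn]
  have e1 : Nat.card ↥(Set.range G) = Nat.card (Fin nb → Bool) :=
    Nat.card_congr (Equiv.ofInjective G hGinj).symm
  have e2 : Nat.card (Fin nb → Bool) = 2 ^ nb := by
    simp [Nat.card_eq_fintype_card]
  have hrange : (Set.range G).ncard = 2 ^ nb := by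
    rw [← Nat.card_coe_set_eq, e1, e2]
  have hfin := classSet_finite (SuffixExpansion r) (α := α) n
  have h2 : (2 : ℕ) ^ nb ≤ classCount (SuffixExpansion r) n := by
    have := Set.ncard_le_ncard hsub hfin
    rw [hrange] at this
    exact this
  have h3 := hpoly n
  have h4 : n + 1 ≤ 2 ^ (j + ℓ) := by
    have hℓ2 : ℓ + 1 ≤ 2 ^ ℓ := Nat.lt_two_pow_self (n := ℓ)
    have h5 : nb * ℓ + nb ≤ nb * 2 ^ ℓ := by
      calc nb * ℓ + nb = nb * (ℓ + 1) := by ring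
      _ ≤ nb * 2 ^ ℓ := Nat.mul_le_mul_left nb hℓ2
    have hpow : nb * 2 ^ ℓ = 2 ^ (j + ℓ) := by rw [hnb, ← pow_add]
    have hnb1 : 1 ≤ nb := Nat.one_le_two_pow
    omega
  have h5 : C * (n + 1) ^ k ≤ 2 ^ (C + (j + ℓ) * k) := by
    have hp1 : (n + 1) ^ k ≤ (2 ^ (j + ℓ)) ^ k := Nat.pow_le_pow_left h4 k
    have hC : C ≤ 2 ^ C := le_of_lt (Nat.lt_two_pow_self (n := C))
    calc C * (n + 1) ^ k ≤ 2 ^ C * (2 ^ (j + ℓ)) ^ k := Nat.mul_le_mul hC hp1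
    _ = 2 ^ (C + (j + ℓ) * k) := by rw [← pow_mul, ← pow_add]
  have h6 : 2 ^ (C + (j + ℓ) * k) < 2 ^ nb := by
    apply Nat.pow_lt_pow_right one_lt_two
    have heq : C + (j + ℓ) * k = (C + ℓ * k) + j * k := by ring
    rw [heq, hnb]
    exact hj
  omega

end Statement9PartIb
section Statement9PartII
open Classical

variable {α : Type} {r : List α → List α → Prop}

noncomputable def sfxW (x : List α) (l : ℕ) : List α := x.drop (x.length - l)

theorem sfxW_length {x : List α} {l : ℕ} (h : l ≤ x.length) : (sfxW x l).length = l := by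
  simp [sfxW]; omega

theorem sfxW_decomp {x : List α} {f g : ℕ} (hfg : f ≤ g) (hg : g ≤ x.length) :
    sfxW x g = (sfxW x g).take (g - f) ++ sfxW x f := by
  conv_lhs => rw [← List.take_append_drop (g - f) (sfxW x g)]
  congr 1
  show (x.drop (x.length - g)).drop (g - f) = x.drop (x.length - f)
  rw [List.drop_drop]
  congr 1
  omega

theorem sfxW_mid {x : List α} {f l g : ℕ} (hfl : f ≤ l) (hlg : l ≤ g) (hg : g ≤ x.length) :
    sfxW x l = ((sfxW x g).take (g - f)).drop (g - l) ++ sfxW x f := by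
  have hP : ((sfxW x g).take (g - f)).length = g - f := by
    rw [List.length_take, sfxW_length hg]; omega
  have h1 : sfxW x l = (sfxW x g).drop (g - l) := by
    show x.drop (x.length - l) = (x.drop (x.length - g)).drop (g - l)
    rw [List.drop_drop]
    congr 1
    omega
  rw [h1]
  conv_lhs => rw [sfxW_decomp (le_trans hfl hlg) hg]
  rw [List.drop_append_of_le_length (by rw [hP]; omega)]

noncomputable def mvalW (hrc : IsRightCongruence r) (x : List α) (l : ℕ) :
    Qt r hrc.1 → Qt r hrc.1 :=
  phiw hrc (sfxW x l)

def coveredW (hrc : IsRightCongruence r) (x : List α) (l : ℕ) : Prop :=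
  ∃ l₁ l₂, l₁ < l ∧ l ≤ l₂ ∧ l₂ ≤ x.length ∧ mvalW hrc x l₁ = mvalW hrc x l₂

noncomputable def occF (hrc : IsRightCongruence r) (x : List α)
    (m : Qt r hrc.1 → Qt r hrc.1) : Finset ℕ :=
  (Finset.range (x.length + 1)).filter (fun l => mvalW hrc x l = m)

noncomputable def uncF (hrc : IsRightCongruence r) (x : List α)
    (m : Qt r hrc.1 → Qt r hrc.1) : Finset ℕ :=
  (Finset.range (x.length + 1)).filter
    (fun l => 1 ≤ l ∧ ¬ coveredW hrc x l ∧ mvalW hrc x l = m)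

theorem mem_occF {hrc : IsRightCongruence r} {x : List α} {m} {l : ℕ} :
    l ∈ occF hrc x m ↔ l ≤ x.length ∧ mvalW hrc x l = m := by
  simp [occF, Nat.lt_succ_iff]

theorem mem_uncF {hrc : IsRightCongruence r} {x : List α} {m} {l : ℕ} :
    l ∈ uncF hrc x m ↔ l ≤ x.length ∧ (1 ≤ l ∧ ¬ coveredW hrc x l ∧ mvalW hrc x l = m) := by
  simp [uncF, Nat.lt_succ_iff]

noncomputable def encOcc (hrc : IsRightCongruence r) (x : List α)
    (m : Qt r hrc.1 → Qt r hrc.1) : Option (ℕ × ℕ) :=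
  if h : (occF hrc x m).Nonempty then some ((occF hrc x m).min' h, (occF hrc x m).max' h)
  else none

noncomputable def encUnc (hrc : IsRightCongruence r) (x : List α)
    (m : Qt r hrc.1 → Qt r hrc.1) : Option (ℕ × Qt r hrc.1) :=
  if h : (uncF hrc x m).Nonempty then
    some ((uncF hrc x m).min' h, qmk hrc.1 (sfxW x ((uncF hrc x m).min' h)))
  else none

noncomputable def enc (hrc : IsRightCongruence r) (x : List α) :
    ℕ × ((Qt r hrc.1 → Qt r hrc.1) → Option (ℕ × ℕ))
      × ((Qt r hrc.1 → Qt r hrc.1) → Option (ℕ × Qt r hrc.1)) :=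
  (x.length, encOcc hrc x, encUnc hrc x)

theorem enc_inj (hrc : IsRightCongruence r)
    (hnc : ¬ ∃ u₂ v₂ u v, IsCriticalTuple r u₂ v₂ u v)
    {x y : List α} (h : enc hrc x = enc hrc y) : SuffixExpansion r x y := by
  have hL : x.length = y.length := congrArg Prod.fst h
  have hocc : encOcc hrc x = encOcc hrc y := congrArg (fun d => d.2.1) h
  have hunc : encUnc hrc x = encUnc hrc y := congrArg (fun d => d.2.2) h
  refine ⟨hL, ?_⟩
  intro i hi
  set l := x.length - i with hldef
  have hl1 : 1 ≤ l := by omega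
  have hlx : l ≤ x.length := by omega
  have hxi : x.drop i = sfxW x l := by
    show x.drop i = x.drop (x.length - l)
    congr 1; omega
  have hyi : y.drop i = sfxW y l := by
    show y.drop i = y.drop (y.length - l)
    congr 1; omega
  rw [hxi, hyi]
  by_cases hcov : coveredW hrc x l
  · -- covered case
    obtain ⟨l₁, l₂, hl₁, hl₂, hl₂n, hm⟩ := hcov
    set m := mvalW hrc x l₁ with hmdef
    have hmem₁ : l₁ ∈ occF hrc x m := mem_occF.mpr ⟨by omega, rfl⟩
    have hmem₂ : l₂ ∈ occF hrc x m := mem_occF.mpr ⟨hl₂n, hm.symm⟩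
    have hne : (occF hrc x m).Nonempty := ⟨l₁, hmem₁⟩
    set f := (occF hrc x m).min' hne with hfdef
    set g := (occF hrc x m).max' hne with hgdef
    have hfx : f ∈ occF hrc x m := Finset.min'_mem _ hne
    have hgx : g ∈ occF hrc x m := Finset.max'_mem _ hne
    have hfl : f < l := lt_of_le_of_lt (Finset.min'_le _ _ hmem₁) hl₁
    have hlg : l ≤ g := le_trans hl₂ (Finset.le_max' _ _ hmem₂)
    have hoccx : encOcc hrc x m = some (f, g) := by
      rw [encOcc, dif_pos hne]
    have hoccy : encOcc hrc y m = some (f, g) := by rw [← hocc]; exact hoccx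
    have hney : (occF hrc y m).Nonempty := by
      by_contra hc
      rw [encOcc, dif_neg hc] at hoccy
      cases hoccy
    rw [encOcc, dif_pos hney] at hoccy
    simp only [Option.some.injEq, Prod.mk.injEq] at hoccy
    have hfy : f ∈ occF hrc y m := hoccy.1 ▸ Finset.min'_mem _ hney
    have hgy : g ∈ occF hrc y m := hoccy.2 ▸ Finset.max'_mem _ hney
    obtain ⟨hfxn, hfxm⟩ := mem_occF.mp hfx
    obtain ⟨hgxn, hgxm⟩ := mem_occF.mp hgx
    obtain ⟨hfyn, hfym⟩ := mem_occF.mp hfy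
    obtain ⟨hgyn, hgym⟩ := mem_occF.mp hgy
    have hfg : f ≤ g := by omega
    set sx := sfxW x f with hsx
    set sy := sfxW y f with hsy
    set Px := (sfxW x g).take (g - f) with hPx
    set Py := (sfxW y g).take (g - f) with hPy
    have e1 : phiw hrc (Px ++ sx) = phiw hrc sx := by
      have hd := sfxW_decomp hfg hgxn
      rw [hPx, hsx, ← hd]
      exact hgxm.trans hfxm.symm
    have e2 : phiw hrc (Py ++ sy) = phiw hrc sy := by
      have hd := sfxW_decomp hfg hgyn
      rw [hPy, hsy, ← hd]
      exact hgym.trans hfym.symm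
    have e3 : phiw hrc sx = phiw hrc sy := hfxm.trans hfym.symm
    have e4 : phiw hrc (Px ++ sy) = phiw hrc sy := by
      calc phiw hrc (Px ++ sy) = phiw hrc sy ∘ phiw hrc Px := phiw_comp hrc Px sy
      _ = phiw hrc sx ∘ phiw hrc Px := by rw [e3]
      _ = phiw hrc (Px ++ sx) := (phiw_comp hrc Px sx).symm
      _ = phiw hrc sx := e1
      _ = phiw hrc sy := e3
    have hPxlen : Px.length = g - f := by
      rw [hPx, List.length_take, sfxW_length hgxn]; omega
    have hPylen : Py.length = g - f := by
      rw [hPy, List.length_take, sfxW_length hgyn]; omega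
    have hkey := key_lemma hrc hnc sy Px Py
      ((phiw_eq_iff hrc).mp e4) ((phiw_eq_iff hrc).mp e2)
      (by rw [hPxlen, hPylen]) (g - l) (by rw [hPxlen]; omega)
    have hxl : sfxW x l = Px.drop (g - l) ++ sx := sfxW_mid (le_of_lt hfl) hlg hgxn
    have hyl : sfxW y l = Py.drop (g - l) ++ sy := sfxW_mid (le_of_lt hfl) hlg hgyn
    rw [hxl, hyl]
    have hcross : r (Px.drop (g - l) ++ sx) (Px.drop (g - l) ++ sy) :=
      (phiw_eq_iff hrc).mp e3 (Px.drop (g - l))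
    exact hrc.1.trans hcross hkey
  · -- uncovered case
    set m := mvalW hrc x l with hmdef
    have hlin : l ∈ uncF hrc x m := mem_uncF.mpr ⟨hlx, hl1, hcov, rfl⟩
    have hne : (uncF hrc x m).Nonempty := ⟨l, hlin⟩
    have hminl : (uncF hrc x m).min' hne = l := by
      have hmm := Finset.min'_mem _ hne
      obtain ⟨hm1, hm2, hm3, hm4⟩ := mem_uncF.mp hmm
      rcases lt_trichotomy ((uncF hrc x m).min' hne) l with hlt | heq | hgt
      · exact absurd ⟨(uncF hrc x m).min' hne, l, hlt, le_refl l, hlx, hm4⟩ hcov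
      · exact heq
      · have := Finset.min'_le _ _ hlin; omega
    have hux : encUnc hrc x m = some (l, qmk hrc.1 (sfxW x l)) := by
      rw [encUnc, dif_pos hne, hminl]
    have huy : encUnc hrc y m = some (l, qmk hrc.1 (sfxW x l)) := by
      rw [← hunc]; exact hux
    have hney : (uncF hrc y m).Nonempty := by
      by_contra hc
      rw [encUnc, dif_neg hc] at huy
      cases huy
    rw [encUnc, dif_pos hney] at huy
    simp only [Option.some.injEq, Prod.mk.injEq] at huy
    obtain ⟨hy1, hy2⟩ := huy
    rw [hy1] at hy2
    exact hrc.1.symm ((qmk_eq_iff hrc.1).mp hy2)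

end Statement9PartII
section Statement9CountAux

variable {α : Type}

theorem se_class_eq {r : List α → List α → Prop} (h : Equivalence (SuffixExpansion r)) {x y}
    (hxy : SuffixExpansion r x y) :
    {z | SuffixExpansion r x z} = {z | SuffixExpansion r y z} := by
  ext z
  exact ⟨fun hz => h.trans (h.symm hxy) hz, fun hz => h.trans hxy hz⟩

end Statement9CountAux

section Statement9Count
open Classical

variable {α : Type} {r : List α → List α → Prop}

theorem encOcc_bound {hrc : IsRightCongruence r} {x : List α} {m} {p : ℕ × ℕ}
    (h : encOcc hrc x m = some p) : p.1 ≤ x.length ∧ p.2 ≤ x.length := by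
  by_cases hne : (occF hrc x m).Nonempty
  · rw [encOcc, dif_pos hne] at h
    simp only [Option.some.injEq] at h
    subst h
    exact ⟨(mem_occF.mp (Finset.min'_mem _ hne)).1, (mem_occF.mp (Finset.max'_mem _ hne)).1⟩
  · rw [encOcc, dif_neg hne] at h
    cases h

theorem encUnc_bound {hrc : IsRightCongruence r} {x : List α} {m} {p : ℕ × Qt r hrc.1}
    (h : encUnc hrc x m = some p) : p.1 ≤ x.length := by
  by_cases hne : (uncF hrc x m).Nonempty
  · rw [encUnc, dif_pos hne] at h
    simp only [Option.some.injEq] at h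
    subst h
    exact (mem_uncF.mp (Finset.min'_mem _ hne)).1
  · rw [encUnc, dif_neg hne] at h
    cases h

def truncN (n p : ℕ) : Fin (n + 1) := ⟨min p n, by omega⟩

theorem truncN_inj {n p q : ℕ} (hp : p ≤ n) (hq : q ≤ n) (h : truncN n p = truncN n q) :
    p = q := by
  have h2 := congrArg Fin.val h
  simp only [truncN] at h2
  omega

abbrev TGT (Q : Type) (n : ℕ) :=
  Fin (n + 1) × ((Q → Q) → Option (Fin (n + 1) × Fin (n + 1)))
    × ((Q → Q) → Option (Fin (n + 1) × Q))

noncomputable def encT (hrc : IsRightCongruence r) (n : ℕ) (x : List α) :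
    TGT (Qt r hrc.1) n :=
  (truncN n x.length,
   fun m => (encOcc hrc x m).map (fun p => (truncN n p.1, truncN n p.2)),
   fun m => (encUnc hrc x m).map (fun p => (truncN n p.1, p.2)))

theorem encT_inj (hrc : IsRightCongruence r)
    (hnc : ¬ ∃ u₂ v₂ u v, IsCriticalTuple r u₂ v₂ u v)
    {n : ℕ} {x y : List α} (hx : x.length ≤ n) (hy : y.length ≤ n)
    (h : encT hrc n x = encT hrc n y) : SuffixExpansion r x y := by
  apply enc_inj hrc hnc
  have h1 : truncN n x.length = truncN n y.length := congrArg Prod.fst h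
  have hL : x.length = y.length := truncN_inj hx hy h1
  have h2 := congrArg (fun d => d.2.1) h
  have h3 := congrArg (fun d => d.2.2) h
  simp only [encT] at h2 h3
  have hocc : encOcc hrc x = encOcc hrc y := by
    funext m
    have h2m := congrFun h2 m
    cases hxo : encOcc hrc x m with
    | none =>
      cases hyo : encOcc hrc y m with
      | none => rfl
      | some q => rw [hxo, hyo] at h2m; simp at h2m
    | some p =>
      cases hyo : encOcc hrc y m with
      | none => rw [hxo, hyo] at h2m; simp at h2m
      | some q =>
        rw [hxo, hyo] at h2m
        simp only [Option.map_some, Option.some.injEq, Prod.mk.injEq] at h2m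
        obtain ⟨ha, hb⟩ := h2m
        obtain ⟨hp1, hp2⟩ := encOcc_bound hxo
        obtain ⟨hq1, hq2⟩ := encOcc_bound hyo
        have e1 : p.1 = q.1 := truncN_inj (le_trans hp1 hx) (le_trans hq1 hy) ha
        have e2 : p.2 = q.2 := truncN_inj (le_trans hp2 hx) (le_trans hq2 hy) hb
        exact congrArg some (Prod.ext e1 e2)
  have hunc : encUnc hrc x = encUnc hrc y := by
    funext m
    have h3m := congrFun h3 m
    cases hxo : encUnc hrc x m with
    | none =>
      cases hyo : encUnc hrc y m with
      | none => rfl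
      | some q => rw [hxo, hyo] at h3m; simp at h3m
    | some p =>
      cases hyo : encUnc hrc y m with
      | none => rw [hxo, hyo] at h3m; simp at h3m
      | some q =>
        rw [hxo, hyo] at h3m
        simp only [Option.map_some, Option.some.injEq, Prod.mk.injEq] at h3m
        obtain ⟨ha, hb⟩ := h3m
        have hp1 := encUnc_bound hxo
        have hq1 := encUnc_bound hyo
        have e1 : p.1 = q.1 := truncN_inj (le_trans hp1 hx) (le_trans hq1 hy) ha
        exact congrArg some (Prod.ext e1 hb)
  show (x.length, encOcc hrc x, encUnc hrc x) = (y.length, encOcc hrc y, encUnc hrc y)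
  rw [hL, hocc, hunc]

noncomputable def clsEnc (hrc : IsRightCongruence r) (n : ℕ) (C : Set (List α)) :
    TGT (Qt r hrc.1) n :=
  if h : ∃ x : List α, x.length ≤ n ∧ C = {z | SuffixExpansion r x z} then
    encT hrc n h.choose
  else (⟨0, Nat.succ_pos n⟩, fun _ => none, fun _ => none)

theorem clsEnc_injOn (hrc : IsRightCongruence r)
    (hnc : ¬ ∃ u₂ v₂ u v, IsCriticalTuple r u₂ v₂ u v) (n : ℕ) :
    Set.InjOn (clsEnc hrc n)
      {C : Set (List α) | ∃ x : List α, x.length ≤ n ∧ C = {z | SuffixExpansion r x z}} := by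
  intro C hC C' hC' hFF
  have hC1 : ∃ x : List α, x.length ≤ n ∧ C = {z | SuffixExpansion r x z} := hC
  have hC2 : ∃ x : List α, x.length ≤ n ∧ C' = {z | SuffixExpansion r x z} := hC'
  rw [clsEnc, dif_pos hC1, clsEnc, dif_pos hC2] at hFF
  obtain ⟨hxlen, hxC⟩ := hC1.choose_spec
  obtain ⟨hylen, hyC⟩ := hC2.choose_spec
  have hse : SuffixExpansion r hC1.choose hC2.choose := encT_inj hrc hnc hxlen hylen hFF
  rw [hxC, hyC]
  exact se_class_eq (se_equiv hrc.1) hse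

theorem classCount_le_card (hrc : IsRightCongruence r)
    (hnc : ¬ ∃ u₂ v₂ u v, IsCriticalTuple r u₂ v₂ u v)
    [Finite (Qt r hrc.1)] (n : ℕ) :
    classCount (SuffixExpansion r) n ≤ Nat.card (TGT (Qt r hrc.1) n) := by
  haveI : Fintype (Qt r hrc.1) := Fintype.ofFinite _
  haveI : DecidableEq (Qt r hrc.1) := Classical.decEq _
  haveI : DecidableEq (Qt r hrc.1 → Qt r hrc.1) := Classical.decEq _
  have hfin : (Set.univ : Set (TGT (Qt r hrc.1) n)).Finite := Set.finite_univ
  have hmaps : Set.MapsTo (clsEnc hrc n)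
      {C : Set (List α) | ∃ x : List α, x.length ≤ n ∧ C = {z | SuffixExpansion r x z}}
      (Set.univ : Set (TGT (Qt r hrc.1) n)) := fun _ _ => trivial
  have h := Set.ncard_le_ncard_of_injOn (clsEnc hrc n) hmaps (clsEnc_injOn hrc hnc n) hfin
  rw [Set.ncard_univ] at h
  exact h

theorem card_TGT (Q : Type) [Fintype Q] (n : ℕ) :
    Nat.card (TGT Q n) =
      (n + 1) * ((n + 1) * (n + 1) + 1) ^ (Fintype.card (Q → Q))
        * ((n + 1) * (Fintype.card Q) + 1) ^ (Fintype.card (Q → Q)) := by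
  rw [Nat.card_eq_fintype_card]
  simp [Fintype.card_prod, Fintype.card_fun, Fintype.card_option, Fintype.card_fin]
  ring

theorem card_TGT_le (c N n : ℕ) :
    (n + 1) * ((n + 1) * (n + 1) + 1) ^ N * ((n + 1) * c + 1) ^ N ≤
      (2 ^ N * (c + 1) ^ N) * (n + 1) ^ (3 * N + 1) := by
  have a1 : (n + 1) * (n + 1) + 1 ≤ 2 * ((n + 1) * (n + 1)) := by nlinarith
  have a2 : (n + 1) * c + 1 ≤ (c + 1) * (n + 1) := by nlinarith
  calc (n + 1) * ((n + 1) * (n + 1) + 1) ^ N * ((n + 1) * c + 1) ^ N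
      ≤ (n + 1) * (2 * ((n + 1) * (n + 1))) ^ N * ((c + 1) * (n + 1)) ^ N := by
        exact Nat.mul_le_mul (Nat.mul_le_mul (le_refl _) (Nat.pow_le_pow_left a1 N))
          (Nat.pow_le_pow_left a2 N)
    _ = (2 ^ N * (c + 1) ^ N) * (n + 1) ^ (3 * N + 1) := by
        rw [mul_pow, mul_pow, mul_pow]
        ring

end Statement9Count

section Statement9Count2
open Classical

theorem card_TGT_le' (Q : Type) [Finite Q] (n : ℕ) :
    Nat.card (TGT Q n) ≤
      (2 ^ Nat.card (Q → Q) * (Nat.card Q + 1) ^ Nat.card (Q → Q))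
        * (n + 1) ^ (3 * Nat.card (Q → Q) + 1) := by
  haveI : Fintype Q := Fintype.ofFinite _
  rw [card_TGT]
  simp only [Nat.card_eq_fintype_card]
  exact card_TGT_le (Fintype.card Q) (Fintype.card (Q → Q)) n

end Statement9Count2
/-- for a finite-index right congruence `~` with suffix expansion
`≈`, the map `n ↦ |Σ^{≤n}/≈|` is polynomially bounded iff `~` has no critical
tuple. -/
theorem statement9 {α : Type} [Fintype α] (r : List α → List α → Prop)
    (hrc : IsRightCongruence r) (hfi : FiniteIndex r) :
    GrowsPolynomially (classCount (SuffixExpansion r)) ↔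
      ¬ ∃ u₂ v₂ u v, IsCriticalTuple r u₂ v₂ u v := by
  constructor
  · intro hpoly
    rintro ⟨u₂, v₂, u, v, hcrit⟩
    exact critical_not_poly hrc hcrit hpoly
  · intro hnc
    haveI : Finite (Qt r hrc.1) := finite_qt hrc.1 hfi
    refine ⟨3 * Nat.card (Qt r hrc.1 → Qt r hrc.1) + 1,
      2 ^ Nat.card (Qt r hrc.1 → Qt r hrc.1)
        * (Nat.card (Qt r hrc.1) + 1) ^ Nat.card (Qt r hrc.1 → Qt r hrc.1), ?_⟩
    intro n
    exact le_trans (classCount_le_card hrc hnc n) (card_TGT_le' _ n)
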